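/- Let 𝓗(Υ) be the combinatorial horoball over a connected graph Υ. For vertices (v,0) and (w,0) on the base level with d_Υ(v,w) ≥ 1, the distance in 𝓗(Υ) satisfies d((v,0),(w,0)) ≥ 2 log d_Υ(v,w) − C for a universal constant C (independent of Υ, v, w). -/

import Mathlib

/-- The combinatorial horoball over a graph `G`: vertices `V × ℕ`; a vertical edge joins
`(v,n)` and `(v,n+1)`; a horizontal edge joins `(v,n)` and `(w,n)` when `d_G(v,w) ≤ eⁿ`. -/
def horoball {V : Type*} (G : SimpleGraph V) : SimpleGraph (V × ℕ) where
  Adj a b :=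
    (a.1 = b.1 ∧ (b.2 = a.2 + 1 ∨ a.2 = b.2 + 1)) ∨
    (a.2 = b.2 ∧ a.1 ≠ b.1 ∧ (G.dist a.1 b.1 : ℝ) ≤ Real.exp a.2)
  symm := by
    constructor
    rintro ⟨x, m⟩ ⟨y, n⟩ (⟨h1, h2⟩ | ⟨h1, h2, h3⟩)
    · exact Or.inl ⟨h1.symm, h2.symm⟩
    · refine Or.inr ⟨h1.symm, h2.symm, ?_⟩
      simp only at h1 h3 ⊢
      rw [SimpleGraph.dist_comm, ← h1]
      exact h3
  loopless := by
    constructor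
    rintro ⟨x, m⟩ (⟨_, h | h⟩ | ⟨_, h, _⟩)
    · omega
    · omega
    · exact h rfl

/-- The test function `f(x,n) = 2 log(max(d(v,x), 2eⁿ)) - n`. -/
noncomputable def hf {V : Type} (G : SimpleGraph V) (v : V) (a : V × ℕ) : ℝ :=
  2 * Real.log (max (G.dist v a.1) (2 * Real.exp a.2)) - a.2

lemma hf_vertical {V : Type} (G : SimpleGraph V) (v x : V) (n : ℕ) :
    |hf G v (x, n + 1) - hf G v (x, n)| ≤ 1 := by
  set d : ℝ := (G.dist v x : ℝ) with hd
  have hd0 : 0 ≤ d := Nat.cast_nonneg _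
  set A : ℝ := max d (2 * Real.exp n) with hA
  set B : ℝ := max d (2 * Real.exp ((n : ℝ) + 1)) with hB
  have hApos : 0 < A := lt_max_of_lt_right (by positivity)
  have hAB : A ≤ B := max_le_max le_rfl
    (mul_le_mul_of_nonneg_left (Real.exp_le_exp.mpr (by linarith)) (by norm_num))
  have hBe : B ≤ Real.exp 1 * A := by
    have he1 : (1 : ℝ) ≤ Real.exp 1 := by
      have := Real.add_one_le_exp (1 : ℝ); linarith
    refine max_le ?_ ?_
    · calc d ≤ A := le_max_left _ _
        _ ≤ Real.exp 1 * A := le_mul_of_one_le_left hApos.le he1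
    · have h4 : (2 : ℝ) * Real.exp ((n : ℝ) + 1) = Real.exp 1 * (2 * Real.exp n) := by
        rw [Real.exp_add]; ring
      rw [h4]
      exact mul_le_mul_of_nonneg_left (le_max_right _ _) (by positivity)
  have h1 : Real.log A ≤ Real.log B := Real.log_le_log hApos hAB
  have h2 : Real.log B ≤ 1 + Real.log A := by
    calc Real.log B ≤ Real.log (Real.exp 1 * A) :=
          Real.log_le_log (lt_of_lt_of_le hApos hAB) hBe
      _ = 1 + Real.log A := by
          rw [Real.log_mul (Real.exp_pos 1).ne' hApos.ne', Real.log_exp]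
  have h5 : hf G v (x, n + 1) - hf G v (x, n)
      = 2 * (Real.log B - Real.log A) - 1 := by
    simp only [hf, hA, hB, hd]
    push_cast
    ring_nf
  rw [h5, abs_le]
  constructor <;> linarith

lemma hf_horizontal {V : Type} {G : SimpleGraph V} (hG : G.Connected) (v x y : V) (n : ℕ)
    (h : (G.dist x y : ℝ) ≤ Real.exp n) :
    |hf G v (y, n) - hf G v (x, n)| ≤ 1 := by
  have hdxy : (0:ℝ) ≤ (G.dist v x : ℝ) := Nat.cast_nonneg _
  set M : ℝ := max (G.dist v x : ℝ) (2 * Real.exp n) with hM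
  set M' : ℝ := max (G.dist v y : ℝ) (2 * Real.exp n) with hM'
  have hMpos : 0 < M := lt_max_of_lt_right (by positivity)
  have hM'pos : 0 < M' := lt_max_of_lt_right (by positivity)
  have hexpM : Real.exp n ≤ M / 2 := by
    have := le_max_right ((G.dist v x : ℝ)) (2 * Real.exp n); linarith
  have hexpM' : Real.exp n ≤ M' / 2 := by
    have := le_max_right ((G.dist v y : ℝ)) (2 * Real.exp n); linarith
  have htri1 : (G.dist v y : ℝ) ≤ (G.dist v x : ℝ) + Real.exp n := by
    have h1 := hG.dist_triangle (u := v) (v := x) (w := y)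
    have h2 : (G.dist v y : ℝ) ≤ (G.dist v x : ℝ) + (G.dist x y : ℝ) := by
      exact_mod_cast h1
    linarith
  have htri2 : (G.dist v x : ℝ) ≤ (G.dist v y : ℝ) + Real.exp n := by
    have h1 := hG.dist_triangle (u := v) (v := y) (w := x)
    have h2 : (G.dist v x : ℝ) ≤ (G.dist v y : ℝ) + (G.dist y x : ℝ) := by
      exact_mod_cast h1
    rw [SimpleGraph.dist_comm (u := y) (v := x)] at h2
    linarith
  have key : ∀ P Q : ℝ, 0 < P → 0 < Q → Real.exp n ≤ P / 2 → Q ≤ P + Real.exp n →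
      Real.log Q - Real.log P ≤ 1 / 2 := by
    intro P Q hP hQ hEP hQP
    have h32 : (3 : ℝ) / 2 ≤ Real.exp (1 / 2) := by
      have := Real.add_one_le_exp ((1 : ℝ) / 2); linarith
    have hQ32 : Q ≤ (3 / 2) * P := by linarith
    calc Real.log Q - Real.log P ≤ Real.log ((3 / 2) * P) - Real.log P :=
          sub_le_sub_right (Real.log_le_log hQ hQ32) _
      _ = Real.log (3 / 2) := by
          rw [Real.log_mul (by norm_num) hP.ne']; ring
      _ ≤ 1 / 2 := by
          calc Real.log (3 / 2) ≤ Real.log (Real.exp (1 / 2)) :=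
                Real.log_le_log (by norm_num) h32
            _ = 1 / 2 := Real.log_exp _
  have hQ1 : M' ≤ M + Real.exp n := by
    refine max_le ?_ (by linarith)
    calc (G.dist v y : ℝ) ≤ (G.dist v x : ℝ) + Real.exp n := htri1
      _ ≤ M + Real.exp n := by
          have := le_max_left ((G.dist v x : ℝ)) (2 * Real.exp n); linarith
  have hQ2 : M ≤ M' + Real.exp n := by
    refine max_le ?_ (by linarith)
    calc (G.dist v x : ℝ) ≤ (G.dist v y : ℝ) + Real.exp n := htri2
      _ ≤ M' + Real.exp n := by
          have := le_max_left ((G.dist v y : ℝ)) (2 * Real.exp n); linarith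
  have k1 := key M M' hMpos hM'pos hexpM hQ1
  have k2 := key M' M hM'pos hMpos hexpM' hQ2
  have hdiff : hf G v (y, n) - hf G v (x, n) = 2 * (Real.log M' - Real.log M) := by
    simp only [hf, hM, hM']; ring
  rw [hdiff, abs_le]
  constructor <;> linarith

lemma hf_lipschitz {V : Type} {G : SimpleGraph V} (hG : G.Connected) (v : V)
    {a b : V × ℕ} (h : (horoball G).Adj a b) : |hf G v b - hf G v a| ≤ 1 := by
  obtain ⟨x, m⟩ := a
  obtain ⟨y, n⟩ := b
  rcases h with ⟨h1, h2 | h2⟩ | ⟨h1, h2, h3⟩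
  · simp only at h1 h2; subst h1 h2; exact hf_vertical G v x m
  · simp only at h1 h2; subst h1 h2
    rw [abs_sub_comm]; exact hf_vertical G v x n
  · simp only at h1 h2 h3; subst h1
    exact hf_horizontal hG v x y m h3
lemma hf_walk_bound {V : Type} {G : SimpleGraph V} (hG : G.Connected) (v : V) :
    ∀ {a b : V × ℕ} (p : (horoball G).Walk a b), |hf G v b - hf G v a| ≤ p.length := by
  intro a b p
  induction p with
  | nil => simp
  | cons h p ih =>
    rename_i u c d
    calc |hf G v d - hf G v u| ≤ |hf G v d - hf G v c| + |hf G v c - hf G v u| := by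
          have := abs_sub_abs_le_abs_sub (hf G v d - hf G v u) 0
          exact abs_sub_le _ _ _
      _ ≤ (p.length : ℝ) + 1 := add_le_add ih (hf_lipschitz hG v h)
      _ = ((SimpleGraph.Walk.cons h p).length : ℝ) := by
          rw [SimpleGraph.Walk.length_cons]; push_cast; ring

/-- There is a universal constant `C` such that in the combinatorial horoball over any
connected graph, `d((v,0),(w,0)) ≥ 2 log d_G(v,w) − C` whenever `d_G(v,w) ≥ 1`. -/
theorem stmt_15 :
    ∃ C : ℝ, ∀ (V : Type) (G : SimpleGraph V), G.Connected → ∀ v w : V,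
      1 ≤ G.dist v w →
      2 * Real.log (G.dist v w) - C ≤ ((horoball G).dist (v, 0) (w, 0) : ℝ) := by
  refine ⟨2 * Real.log 2, ?_⟩
  intro V G hG v w hvw
  -- reachability in the horoball via level 0
  have hadj : ∀ {a b : V}, G.Adj a b → (horoball G).Adj (a, 0) (b, 0) := by
    intro a b hab
    refine Or.inr ⟨rfl, hab.ne, ?_⟩
    have hd1 : G.dist a b ≤ 1 := by
      have := SimpleGraph.dist_le (SimpleGraph.Walk.cons hab SimpleGraph.Walk.nil)
      simpa using this
    calc (G.dist a b : ℝ) ≤ 1 := by exact_mod_cast hd1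
      _ ≤ Real.exp ((0 : ℕ) : ℝ) := by simp
  have hreach : (horoball G).Reachable (v, 0) (w, 0) := by
    obtain ⟨p⟩ := hG v w
    exact ⟨p.map ⟨fun x => (x, 0), hadj⟩⟩
  obtain ⟨p, hp⟩ := hreach.exists_walk_length_eq_dist
  have hbound := hf_walk_bound hG v p
  rw [hp] at hbound
  -- evaluate hf at endpoints
  have hv0 : hf G v (v, 0) = 2 * Real.log 2 := by
    simp [hf, SimpleGraph.dist_self]
  have hw0 : 2 * Real.log (G.dist v w) ≤ hf G v (w, 0) := by
    simp only [hf, Nat.cast_zero, Real.exp_zero, mul_one, sub_zero]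
    have h1 : (1 : ℝ) ≤ (G.dist v w : ℝ) := by exact_mod_cast hvw
    refine mul_le_mul_of_nonneg_left ?_ (by norm_num)
    exact Real.log_le_log (by linarith) (le_max_left _ _)
  have habs : hf G v (w, 0) - hf G v (v, 0) ≤ ((horoball G).dist (v, 0) (w, 0) : ℝ) :=
    le_trans (le_abs_self _) hbound
  linarith
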